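/- Let θ, η ∈ ℝ and ν > 0 be fixed. For ε > 0 define M̂(ε) = ν² + ν + (2ν+1)(1 − 2^{−2ε})(θ² + η²) + ((3 + 2^{−8ε} − 4^{1−ε})/2)(θ⁴ + η⁴) and M̄ = (ν+1)². Then there exists ε₀ > 0 such that M̂(ε) < M̄ for all ε with 0 < ε < ε₀. -/
import Mathlib


/-- for sufficiently small `ε > 0`, the mean square error `M̂(ε)` of the
noisy Hayashi scale estimator (n = 2) is smaller than the mean square error
`M̄ = (ν+1)²` of the naive scale estimator. -/
theorem statement17 (θ η ν : ℝ) (hν : 0 < ν) :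
    ∃ ε₀ > (0 : ℝ), ∀ ε : ℝ, 0 < ε → ε < ε₀ →
      ν ^ 2 + ν + (2 * ν + 1) * (1 - (2 : ℝ) ^ (-(2 * ε))) * (θ ^ 2 + η ^ 2)
          + ((3 + (2 : ℝ) ^ (-(8 * ε)) - (4 : ℝ) ^ (1 - ε)) / 2) * (θ ^ 4 + η ^ 4)
        < (ν + 1) ^ 2 := by
  set f : ℝ → ℝ := fun ε =>
      ν ^ 2 + ν + (2 * ν + 1) * (1 - (2 : ℝ) ^ (-(2 * ε))) * (θ ^ 2 + η ^ 2)
          + ((3 + (2 : ℝ) ^ (-(8 * ε)) - (4 : ℝ) ^ (1 - ε)) / 2) * (θ ^ 4 + η ^ 4) with hf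
  have h2 : Continuous fun ε : ℝ => (2 : ℝ) ^ (-(2 * ε)) :=
    continuous_const.rpow ((continuous_const.mul continuous_id).neg)
      (fun _ => Or.inl two_ne_zero)
  have h8 : Continuous fun ε : ℝ => (2 : ℝ) ^ (-(8 * ε)) :=
    continuous_const.rpow ((continuous_const.mul continuous_id).neg)
      (fun _ => Or.inl two_ne_zero)
  have h4 : Continuous fun ε : ℝ => (4 : ℝ) ^ (1 - ε) :=
    continuous_const.rpow (continuous_const.sub continuous_id)
      (fun _ => Or.inl (by norm_num))
  have hcont : Continuous f :=
    ((continuous_const.add ((continuous_const.mul (continuous_const.sub h2)).mul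
      continuous_const)).add
      ((((continuous_const.add h8).sub h4).div_const 2).mul continuous_const))
  have hf0 : f 0 = ν ^ 2 + ν := by
    simp [hf, Real.rpow_zero]
    norm_num
  have hlt : f 0 < (ν + 1) ^ 2 := by
    rw [hf0]; nlinarith
  have hev : ∀ᶠ ε in nhds (0 : ℝ), f ε < (ν + 1) ^ 2 :=
    (hcont.continuousAt (x := 0)).eventually_lt continuousAt_const hlt
  rcases Metric.eventually_nhds_iff.mp hev with ⟨δ, hδ, h⟩
  exact ⟨δ, hδ, fun ε hε hεδ => h (by simpa [abs_of_pos hε] using hεδ)⟩
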